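/- Let μ1, μ2 ≥ 0 and define, for i ∈ {1, 2, 3}, L_i(t) := log(φ_{μ_i,1}(t)/φ_{0,1}(t)) where μ3 := √(μ1² + μ2²) and φ_{m,1} is the density of N(m, 1). Then for every ε ∈ ℝ: ∫∫ max(1 − e^{ε − L_1(t_1) − L_2(t_2)}, 0) φ_{μ1,1}(t_1) φ_{μ2,1}(t_2) dt_1 dt_2 = ∫ max(1 − e^{ε − L_3(t)}, 0) φ_{μ3,1}(t) dt. That is, the composition of the privacy loss distributions of the Gaussian pairs (N(μ1,1), N(0,1)) and (N(μ2,1), N(0,1)) yields exactly the privacy loss distribution of the single Gaussian pair (N(√(μ1²+μ2²),1), N(0,1)). -/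

import Mathlib

open MeasureTheory Real

/-- Density of the unit-variance Gaussian `N(m, 1)`. -/
noncomputable def gaussPDF (m t : ℝ) : ℝ :=
  (Real.sqrt (2 * π))⁻¹ * exp (-(t - m) ^ 2 / 2)

lemma gaussPDF_eq (m : ℝ) : gaussPDF m = ProbabilityTheory.gaussianPDFReal m 1 := by
  funext t
  simp [gaussPDF, ProbabilityTheory.gaussianPDFReal]

lemma gaussPDF_nonneg (m t : ℝ) : 0 ≤ gaussPDF m t := by
  unfold gaussPDF; positivity

lemma gaussPDF_le (m t : ℝ) : gaussPDF m t ≤ (Real.sqrt (2 * π))⁻¹ := by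
  unfold gaussPDF
  have h1 : exp (-(t - m) ^ 2 / 2) ≤ 1 := by
    rw [Real.exp_le_one_iff]
    nlinarith [sq_nonneg (t - m)]
  have h2 : (0:ℝ) ≤ (Real.sqrt (2 * π))⁻¹ := by positivity
  nlinarith

lemma continuous_gaussPDF (m : ℝ) : Continuous (gaussPDF m) := by
  unfold gaussPDF; fun_prop

lemma integrable_gaussPDF (m : ℝ) : Integrable (gaussPDF m) := by
  rw [gaussPDF_eq]; exact ProbabilityTheory.integrable_gaussianPDFReal m 1

lemma integral_gaussPDF (m : ℝ) : ∫ t, gaussPDF m t = 1 := by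
  rw [gaussPDF_eq]; exact ProbabilityTheory.integral_gaussianPDFReal_eq_one m one_ne_zero

lemma gaussPDF_shift (m d t : ℝ) : gaussPDF m (t + d) = gaussPDF (m - d) t := by
  unfold gaussPDF; ring_nf

lemma integrable_gaussPDF_affine (m d : ℝ) {k : ℝ} (hk : k ≠ 0) :
    Integrable (fun u => gaussPDF m (k * u + d)) := by
  simp only [gaussPDF_shift]
  exact (integrable_gaussPDF (m - d)).comp_mul_left' hk

lemma integral_gaussPDF_affine (m d : ℝ) {k : ℝ} (hk : 0 < k) :
    ∫ u : ℝ, k * gaussPDF m (k * u + d) = 1 := by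
  rw [integral_const_mul]
  simp only [gaussPDF_shift]
  rw [Measure.integral_comp_mul_left (gaussPDF (m - d)) k, integral_gaussPDF, smul_eq_mul,
    mul_one, abs_inv, abs_of_pos hk, mul_inv_cancel₀ hk.ne']

lemma log_gaussPDF_ratio (m t : ℝ) :
    log (gaussPDF m t / gaussPDF 0 t) = m * t - m ^ 2 / 2 := by
  unfold gaussPDF
  rw [mul_div_mul_left _ _ (by positivity : ((Real.sqrt (2 * π))⁻¹ : ℝ) ≠ 0),
    ← Real.exp_sub, Real.log_exp]
  ring

lemma key (a b : ℝ) (ha : 0 ≤ a) (hb : 0 ≤ b) (F : ℝ → ℝ) (hF0 : ∀ s, 0 ≤ F s)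
    (hF1 : ∀ s, F s ≤ 1) (hFc : Continuous F) :
    ∫ t1 : ℝ, (∫ t2 : ℝ, F (a * t1 + b * t2) * gaussPDF b t2) * gaussPDF a t1
      = ∫ t : ℝ, F (Real.sqrt (a ^ 2 + b ^ 2) * t) * gaussPDF (Real.sqrt (a ^ 2 + b ^ 2)) t := by
  rcases eq_or_lt_of_le hb with hb0 | hb
  · subst hb0
    have hs : Real.sqrt (a ^ 2 + 0 ^ 2) = a := by
      rw [show a ^ 2 + 0 ^ 2 = a ^ 2 by ring, Real.sqrt_sq ha]
    simp only [hs, zero_mul, add_zero, integral_const_mul, integral_gaussPDF, mul_one]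
  rcases eq_or_lt_of_le ha with ha0 | ha
  · subst ha0
    have hs : Real.sqrt (0 ^ 2 + b ^ 2) = b := by
      rw [show (0:ℝ) ^ 2 + b ^ 2 = b ^ 2 by ring, Real.sqrt_sq hb.le]
    simp only [hs, zero_mul, zero_add]
    rw [integral_const_mul, integral_gaussPDF, mul_one]
  · set c := Real.sqrt (a ^ 2 + b ^ 2) with hcdef
    have hc : 0 < c := Real.sqrt_pos.2 (by positivity)
    have hc2 : c ^ 2 = a ^ 2 + b ^ 2 := Real.sq_sqrt (by positivity)
    set k := c / b with hkdef
    have hk : 0 < k := div_pos hc hb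
    -- product of gaussians identity
    have halg : ∀ t1 u : ℝ, gaussPDF b (k*u + -(a*t1/b)) * gaussPDF a t1
        = gaussPDF c u * gaussPDF 0 (k*t1 + -(a*u/b)) := by
      intro t1 u
      unfold gaussPDF
      have hmul : ∀ x y : ℝ, ((Real.sqrt (2*π))⁻¹ * exp x) * ((Real.sqrt (2*π))⁻¹ * exp y)
          = ((Real.sqrt (2*π))⁻¹)^2 * exp (x + y) := by
        intro x y; rw [Real.exp_add]; ring
      rw [hmul, hmul]
      congr 1
      rw [Real.exp_eq_exp, hkdef]
      field_simp
      linear_combination ((t1^2 + b^2 - u^2)) * hc2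
    -- step 1: substitution in inner integral
    have h1 : ∀ t1 : ℝ, ∫ t2 : ℝ, F (a*t1 + b*t2) * gaussPDF b t2
        = ∫ u : ℝ, F (c*u) * (k * gaussPDF b (k*u + -(a*t1/b))) := by
      intro t1
      set g : ℝ → ℝ := fun y => F (a*t1 + b*y) * gaussPDF b y with hg
      set d : ℝ := -(a*t1/b) with hd
      have A : ∫ u : ℝ, g (k*u + d) = |k⁻¹| • ∫ y : ℝ, g y := by
        rw [show (fun u : ℝ => g (k*u + d)) = fun u : ℝ => (fun x => g (x + d)) (k*u) from rfl,
          Measure.integral_comp_mul_left (fun x => g (x + d)) k,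
          integral_add_right_eq_self g d]
      calc ∫ t2 : ℝ, F (a*t1 + b*t2) * gaussPDF b t2 = ∫ y : ℝ, g y := rfl
        _ = k * (|k⁻¹| • ∫ y : ℝ, g y) := by
            rw [smul_eq_mul, abs_inv, abs_of_pos hk]; field_simp
        _ = k * ∫ u : ℝ, g (k*u + d) := by rw [A]
        _ = ∫ u : ℝ, k * g (k*u + d) := (integral_const_mul k _).symm
        _ = ∫ u : ℝ, F (c*u) * (k * gaussPDF b (k*u + d)) := by
            congr 1; funext u
            have harg : a*t1 + b*(k*u + d) = c*u := by
              rw [hkdef, hd]; field_simp; ring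
            rw [hg]; simp only []
            rw [harg]; ring
    -- the two-variable integrand after substitution
    set H : ℝ → ℝ → ℝ :=
      fun t1 u => F (c*u) * gaussPDF c u * (k * gaussPDF 0 (k*t1 + -(a*u/b))) with hH
    have hHc : Continuous (Function.uncurry H) := by
      apply Continuous.mul
      · exact (hFc.comp (continuous_const.mul continuous_snd)).mul
          ((continuous_gaussPDF c).comp continuous_snd)
      · exact continuous_const.mul ((continuous_gaussPDF 0).comp
          ((continuous_const.mul continuous_fst).add
            (((continuous_const.mul continuous_snd).div_const b).neg)))
    have hHnn : ∀ t1 u : ℝ, 0 ≤ H t1 u := fun t1 u =>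
      mul_nonneg (mul_nonneg (hF0 _) (gaussPDF_nonneg _ _))
        (mul_nonneg hk.le (gaussPDF_nonneg _ _))
    have hHle : ∀ t1 u : ℝ, H t1 u ≤ gaussPDF c u * (k * gaussPDF 0 (k*t1 + -(a*u/b))) := by
      intro t1 u
      have := mul_le_mul_of_nonneg_right
        (mul_le_of_le_one_left (gaussPDF_nonneg c u) (hF1 (c*u)))
        (mul_nonneg hk.le (gaussPDF_nonneg 0 (k*t1 + -(a*u/b))))
      exact this
    -- integral over t1 of the weight is gaussPDF a t1 related bound
    have hGint : ∀ t1 : ℝ, Integrable (fun u => gaussPDF c u * (k * gaussPDF 0 (k*t1 + -(a*u/b)))) := by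
      intro t1
      have heq : (fun u => gaussPDF c u * (k * gaussPDF 0 (k*t1 + -(a*u/b))))
          = fun u => (k * gaussPDF b (k*u + -(a*t1/b))) * gaussPDF a t1 := by
        funext u
        linear_combination (-k) * halg t1 u
      rw [heq]
      exact ((integrable_gaussPDF_affine b (-(a*t1/b)) hk.ne').const_mul k).mul_const _
    have hGval : ∀ t1 : ℝ, ∫ u : ℝ, gaussPDF c u * (k * gaussPDF 0 (k*t1 + -(a*u/b)))
        = gaussPDF a t1 := by
      intro t1
      have heq : (fun u => gaussPDF c u * (k * gaussPDF 0 (k*t1 + -(a*u/b))))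
          = fun u => (k * gaussPDF b (k*u + -(a*t1/b))) * gaussPDF a t1 := by
        funext u
        linear_combination (-k) * halg t1 u
      rw [heq, integral_mul_const, integral_gaussPDF_affine b _ hk, one_mul]
    have hint : Integrable (Function.uncurry H) (volume.prod volume) := by
      rw [integrable_prod_iff hHc.aestronglyMeasurable]
      constructor
      · refine Filter.Eventually.of_forall fun t1 => ?_
        refine Integrable.mono' (hGint t1)
          ((hHc.comp (Continuous.prodMk_right t1)).aestronglyMeasurable) ?_
        refine Filter.Eventually.of_forall fun u => ?_
        show ‖H t1 u‖ ≤ _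
        rw [Real.norm_eq_abs, abs_of_nonneg (hHnn t1 u)]
        exact hHle t1 u
      · refine Integrable.mono' (integrable_gaussPDF a)
          ((hHc.norm.stronglyMeasurable.integral_prod_right').aestronglyMeasurable) ?_
        refine Filter.Eventually.of_forall fun t1 => ?_
        rw [Real.norm_eq_abs, abs_of_nonneg (integral_nonneg fun u => norm_nonneg _)]
        have hnrm : ∀ u : ℝ, ‖Function.uncurry H (t1, u)‖ = H t1 u := fun u =>
          norm_of_nonneg (hHnn t1 u)
        calc ∫ u : ℝ, ‖Function.uncurry H (t1, u)‖ = ∫ u : ℝ, H t1 u := by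
              simp only [hnrm]
          _ ≤ ∫ u : ℝ, gaussPDF c u * (k * gaussPDF 0 (k*t1 + -(a*u/b))) :=
              integral_mono_of_nonneg (Filter.Eventually.of_forall (hHnn t1)) (hGint t1)
                (Filter.Eventually.of_forall (hHle t1))
          _ = gaussPDF a t1 := hGval t1
    calc ∫ t1 : ℝ, (∫ t2 : ℝ, F (a*t1 + b*t2) * gaussPDF b t2) * gaussPDF a t1
        = ∫ t1 : ℝ, ∫ u : ℝ, H t1 u := by
          congr 1; funext t1
          rw [h1 t1, ← integral_mul_const]
          congr 1; funext u
          rw [hH]; simp only []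
          linear_combination (F (c*u) * k) * halg t1 u
      _ = ∫ u : ℝ, ∫ t1 : ℝ, H t1 u := integral_integral_swap hint
      _ = ∫ u : ℝ, F (c*u) * gaussPDF c u := by
          congr 1; funext u
          rw [show (fun t1 => H t1 u)
            = fun t1 => (F (c*u) * gaussPDF c u) * (k * gaussPDF 0 (k*t1 + -(a*u/b))) from rfl,
            integral_const_mul, integral_gaussPDF_affine 0 _ hk, mul_one]

theorem gaussian_pld_composition (μ1 μ2 : ℝ) (h1 : 0 ≤ μ1) (h2 : 0 ≤ μ2) :
    ∀ ε : ℝ,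
      (∫ t1 : ℝ, (∫ t2 : ℝ,
          max (1 - exp (ε - log (gaussPDF μ1 t1 / gaussPDF 0 t1)
            - log (gaussPDF μ2 t2 / gaussPDF 0 t2))) 0 * gaussPDF μ2 t2) * gaussPDF μ1 t1)
        = ∫ t : ℝ,
            max (1 - exp (ε - log (gaussPDF (Real.sqrt (μ1 ^ 2 + μ2 ^ 2)) t / gaussPDF 0 t))) 0
              * gaussPDF (Real.sqrt (μ1 ^ 2 + μ2 ^ 2)) t := by
  intro ε
  have hc2 : Real.sqrt (μ1 ^ 2 + μ2 ^ 2) ^ 2 = μ1 ^ 2 + μ2 ^ 2 :=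
    Real.sq_sqrt (by positivity)
  set F : ℝ → ℝ := fun s => max (1 - exp (ε + (μ1 ^ 2 + μ2 ^ 2) / 2 - s)) 0 with hF
  have hF0 : ∀ s, 0 ≤ F s := fun s => le_max_right _ _
  have hF1 : ∀ s, F s ≤ 1 := fun s =>
    max_le (by nlinarith [Real.exp_pos (ε + (μ1 ^ 2 + μ2 ^ 2) / 2 - s)]) one_pos.le
  have hFc : Continuous F :=
    (continuous_const.sub (Real.continuous_exp.comp
      (continuous_const.sub continuous_id))).max continuous_const
  have e1 : ∀ t1 t2 : ℝ,
      max (1 - exp (ε - log (gaussPDF μ1 t1 / gaussPDF 0 t1)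
        - log (gaussPDF μ2 t2 / gaussPDF 0 t2))) 0 = F (μ1 * t1 + μ2 * t2) := by
    intro t1 t2
    rw [log_gaussPDF_ratio, log_gaussPDF_ratio, hF]
    simp only []
    congr 2
    ring
  have e2 : ∀ t : ℝ,
      max (1 - exp (ε - log (gaussPDF (Real.sqrt (μ1 ^ 2 + μ2 ^ 2)) t / gaussPDF 0 t))) 0
        = F (Real.sqrt (μ1 ^ 2 + μ2 ^ 2) * t) := by
    intro t
    rw [log_gaussPDF_ratio, hF]
    simp only []
    have harg : ε - (Real.sqrt (μ1 ^ 2 + μ2 ^ 2) * t - Real.sqrt (μ1 ^ 2 + μ2 ^ 2) ^ 2 / 2)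
        = ε + (μ1 ^ 2 + μ2 ^ 2) / 2 - Real.sqrt (μ1 ^ 2 + μ2 ^ 2) * t := by
      linear_combination (1/2 : ℝ) * hc2
    rw [harg]
  simp only [e1, e2]
  exact key μ1 μ2 h1 h2 F hF0 hF1 hFc
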